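/- arXiv:1804.08014 — 2 statements merged into one kernel-verified Lean document; each statement's English description precedes it below -/
import Mathlib

section
/- Let C ≥ 0 and λ ∈ ℝ. There exists a nonzero continuously differentiable 1-periodic pair of real functions (x₁, x₂) : ℝ → ℝ² satisfying x₁′(t) = −λ·x₂(t) and x₂′(t) = (λ + C)·x₁(t) for all t, if and only if λ(λ + C) = 4π²k² for some integer k. -/
open Real

private lemma hasDerivAt_cos_lin (ω t : ℝ) :
    HasDerivAt (fun s => Real.cos (ω * s)) (-Real.sin (ω * t) * ω) t := by
  have h1 : HasDerivAt (fun s : ℝ => ω * s) ω t := by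
    simpa using (hasDerivAt_id' (x := t)).const_mul ω
  simpa using h1.cos

private lemma hasDerivAt_sin_lin (ω t : ℝ) :
    HasDerivAt (fun s => Real.sin (ω * s)) (Real.cos (ω * t) * ω) t := by
  have h1 : HasDerivAt (fun s : ℝ => ω * s) ω t := by
    simpa using (hasDerivAt_id' (x := t)).const_mul ω
  simpa using h1.sin

private lemma periodic_monotone_const {f : ℝ → ℝ} (hm : Monotone f)
    (hp : Function.Periodic f 1) (t : ℝ) : f t = f 0 := by
  have h0 : f (⌊t⌋ : ℝ) = f 0 := by simpa using hp.int_mul_eq ⌊t⌋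
  have h1 : f ((⌊t⌋ : ℝ) + 1) = f (⌊t⌋ : ℝ) := hp _
  have h2 : f (⌊t⌋ : ℝ) ≤ f t := hm (Int.floor_le t)
  have h3 : f t ≤ f ((⌊t⌋ : ℝ) + 1) := hm (Int.lt_floor_add_one t).le
  rw [h1] at h3
  rw [← h0]
  exact le_antisymm h3 h2

theorem stmt2 (C : ℝ) (hC : 0 ≤ C) (lam : ℝ) :
    (∃ x₁ x₂ : ℝ → ℝ,
        ContDiff ℝ 1 x₁ ∧ ContDiff ℝ 1 x₂ ∧
        Function.Periodic x₁ 1 ∧ Function.Periodic x₂ 1 ∧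
        (∃ t, x₁ t ≠ 0 ∨ x₂ t ≠ 0) ∧
        (∀ t : ℝ, deriv x₁ t = -lam * x₂ t) ∧
        (∀ t : ℝ, deriv x₂ t = (lam + C) * x₁ t)) ↔
      ∃ k : ℤ, lam * (lam + C) = 4 * π ^ 2 * (k : ℝ) ^ 2 := by
  constructor
  · rintro ⟨x₁, x₂, h1, h2, hp1, hp2, ⟨t₀, ht₀⟩, hd1, hd2⟩
    have hdx₁ : Differentiable ℝ x₁ := h1.differentiable one_ne_zero
    have hdx₂ : Differentiable ℝ x₂ := h2.differentiable one_ne_zero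
    have hD1 : ∀ t, HasDerivAt x₁ (-lam * x₂ t) t := fun t => hd1 t ▸ (hdx₁ t).hasDerivAt
    have hD2 : ∀ t, HasDerivAt x₂ ((lam + C) * x₁ t) t := fun t => hd2 t ▸ (hdx₂ t).hasDerivAt
    rcases lt_trichotomy (lam * (lam + C)) 0 with hμ | hμ | hμ
    · -- negative case: impossible
      exfalso
      have hl : lam < 0 := by nlinarith
      have hlc : 0 < lam + C := by nlinarith
      set F : ℝ → ℝ := fun t => x₁ t * x₂ t with hFdef
      have hF : ∀ t, HasDerivAt F ((-lam * x₂ t) * x₂ t + x₁ t * ((lam + C) * x₁ t)) t :=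
        fun t => (hD1 t).mul (hD2 t)
      have hmono : Monotone F := by
        refine monotone_of_deriv_nonneg (fun t => (hF t).differentiableAt) (fun t => ?_)
        rw [(hF t).deriv]
        nlinarith [mul_self_nonneg (x₁ t), mul_self_nonneg (x₂ t)]
      have hper : Function.Periodic F 1 := fun t => by simp [hFdef, hp1 t, hp2 t]
      have hconst : ∀ t, F t = F 0 := periodic_monotone_const hmono hper
      have hFeq : F = fun _ => F 0 := funext hconst
      have hd0 : deriv F t₀ = 0 := by rw [hFeq]; simp
      rw [(hF t₀).deriv] at hd0
      have h10 : x₁ t₀ * x₁ t₀ = 0 := le_antisymm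
        (by nlinarith [mul_self_nonneg (x₂ t₀)]) (mul_self_nonneg _)
      have h20 : x₂ t₀ * x₂ t₀ = 0 := le_antisymm
        (by nlinarith [mul_self_nonneg (x₁ t₀)]) (mul_self_nonneg _)
      rcases ht₀ with h | h
      · exact h (mul_self_eq_zero.mp h10)
      · exact h (mul_self_eq_zero.mp h20)
    · exact ⟨0, by simpa using hμ⟩
    · -- positive case
      have hlam : lam ≠ 0 := by rintro rfl; simp at hμ
      obtain ⟨ω, hωpos, hω2⟩ : ∃ w : ℝ, 0 < w ∧ w * w = lam * (lam + C) :=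
        ⟨Real.sqrt (lam * (lam + C)), Real.sqrt_pos.mpr hμ, Real.mul_self_sqrt hμ.le⟩
      set A := x₁ 0 with hAdef
      set B := x₂ 0 with hBdef
      -- comparison solution (scaled by ω): X₁ = ωA cos - λB sin, X₂ = ωB cos + (λ+C)A sin
      set u : ℝ → ℝ := fun t => ω * x₁ t - (ω * A * Real.cos (ω * t) - lam * B * Real.sin (ω * t))
        with hudef
      set v : ℝ → ℝ := fun t => ω * x₂ t - (ω * B * Real.cos (ω * t) + (lam + C) * A * Real.sin (ω * t))
        with hvdef
      clear_value A B u v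
      have hu : ∀ t, HasDerivAt u (-lam * v t) t := by
        intro t
        have h := ((hD1 t).const_mul ω).sub
          (((hasDerivAt_cos_lin ω t).const_mul (ω * A)).sub
            ((hasDerivAt_sin_lin ω t).const_mul (lam * B)))
        rw [hudef]
        refine h.congr_deriv (Eq.symm ?_)
        simp only [hvdef]
        linear_combination (-(A * Real.sin (ω * t))) * hω2
      have hv : ∀ t, HasDerivAt v ((lam + C) * u t) t := by
        intro t
        have h := ((hD2 t).const_mul ω).sub
          (((hasDerivAt_cos_lin ω t).const_mul (ω * B)).add
            ((hasDerivAt_sin_lin ω t).const_mul ((lam + C) * A)))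
        rw [hvdef]
        refine h.congr_deriv (Eq.symm ?_)
        simp only [hudef]
        linear_combination (-(B * Real.sin (ω * t))) * hω2
      set E : ℝ → ℝ := fun t => (lam + C) * (u t) ^ 2 + lam * (v t) ^ 2 with hEdef
      have hE : ∀ t, HasDerivAt E 0 t := by
        intro t
        have h := (((hu t).pow 2).const_mul (lam + C)).add (((hv t).pow 2).const_mul lam)
        refine h.congr_deriv (Eq.symm ?_)
        ring
      have hEconst : ∀ t, E t = E 0 :=
        fun t => is_const_of_deriv_eq_zero (fun s => (hE s).differentiableAt)
          (fun s => (hE s).deriv) t 0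
      have hu0 : u 0 = 0 := by simp [hudef, hAdef, hBdef]
      have hv0 : v 0 = 0 := by simp [hvdef, hAdef, hBdef]
      have hE0 : E 0 = 0 := by simp [hEdef, hu0, hv0]
      have huv : ∀ t, u t = 0 ∧ v t = 0 := by
        intro t
        have hEt : (lam + C) * (u t) ^ 2 + lam * (v t) ^ 2 = 0 := by
          have h := hEconst t
          rw [hE0] at h
          simpa [hEdef] using h
        have hEt' : lam * (lam + C) * (u t) ^ 2 + (lam * v t) ^ 2 = 0 := by
          linear_combination lam * hEt
        have hEt'' : ((lam + C) * u t) ^ 2 + lam * (lam + C) * (v t) ^ 2 = 0 := by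
          linear_combination (lam + C) * hEt
        have hu2 : (u t) ^ 2 = 0 := le_antisymm
          (by nlinarith [hEt', sq_nonneg (lam * v t)]) (sq_nonneg _)
        have hv2 : (v t) ^ 2 = 0 := le_antisymm
          (by nlinarith [hEt'', sq_nonneg ((lam + C) * u t)]) (sq_nonneg _)
        exact ⟨pow_eq_zero_iff two_ne_zero |>.mp hu2, pow_eq_zero_iff two_ne_zero |>.mp hv2⟩
      by_cases hz : A = 0 ∧ B = 0
      · exfalso
        obtain ⟨hA0, hB0⟩ := hz
        have hx1 : ∀ t, x₁ t = 0 := by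
          intro t
          have := (huv t).1
          simp only [hudef, hA0, hB0, mul_zero, zero_mul, mul_zero, sub_zero, zero_sub] at this
          have : ω * x₁ t = 0 := by linarith [this]
          exact (mul_eq_zero.mp this).resolve_left hωpos.ne'
        have hx2 : ∀ t, x₂ t = 0 := by
          intro t
          have := (huv t).2
          simp only [hvdef, hA0, hB0, mul_zero, zero_mul, mul_zero, sub_zero, zero_sub] at this
          have : ω * x₂ t = 0 := by linarith [this]
          exact (mul_eq_zero.mp this).resolve_left hωpos.ne'
        rcases ht₀ with h | h
        · exact h (hx1 t₀)
        · exact h (hx2 t₀)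
      · -- periodicity equations
        have hx11 : x₁ 1 = A := by rw [hAdef]; simpa using hp1 0
        have hx21 : x₂ 1 = B := by rw [hBdef]; simpa using hp2 0
        have hu1 := (huv 1).1
        have hv1 := (huv 1).2
        simp only [hudef, hvdef, hx11, hx21, mul_one] at hu1 hv1
        -- G1 : ω*A*(cos ω - 1) = lam*B*(sin ω)
        have G1 : ω * A * (Real.cos ω - 1) = lam * B * Real.sin ω := by
          linear_combination (-1 : ℝ) * hu1
        have G2 : lam * B * (Real.cos ω - 1) = -(ω * A) * Real.sin ω := by
          have hG2 : ω * (lam * B * (Real.cos ω - 1)) = ω * (-(ω * A) * Real.sin ω) := by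
            linear_combination (-lam) * hv1 + (A * Real.sin ω) * hω2
          exact mul_left_cancel₀ hωpos.ne' hG2
        have hs : Real.sin ω = 0 := by
          by_contra hs
          have hkey : ((lam * B) ^ 2 + (ω * A) ^ 2) * Real.sin ω = 0 := by
            linear_combination (ω * A) * G2 - (lam * B) * G1
          have h0 : (lam * B) ^ 2 + (ω * A) ^ 2 = 0 :=
            by rcases mul_eq_zero.mp hkey with h | h; exact h; exact absurd h hs
          have hA0 : ω * A = 0 := by nlinarith [sq_nonneg (lam * B), sq_nonneg (ω * A)]
          have hB0 : lam * B = 0 := by nlinarith [sq_nonneg (lam * B), sq_nonneg (ω * A)]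
          exact hz ⟨(mul_eq_zero.mp hA0).resolve_left hωpos.ne',
            (mul_eq_zero.mp hB0).resolve_left hlam⟩
        have hc2 : (Real.cos ω - 1) * (Real.cos ω + 1) = 0 := by
          have hpyth := Real.sin_sq_add_cos_sq ω
          linear_combination hpyth - Real.sin ω * hs
        have hc : Real.cos ω = 1 := by
          rcases mul_eq_zero.mp hc2 with h | h
          · linarith
          · exfalso
            have hcm : Real.cos ω = -1 := by linarith
            rw [hcm, hs] at G1 G2
            have hA0 : ω * A = 0 := by linear_combination (-1/2 : ℝ) * G1
            have hB0 : lam * B = 0 := by linear_combination (-1/2 : ℝ) * G2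
            exact hz ⟨(mul_eq_zero.mp hA0).resolve_left hωpos.ne',
              (mul_eq_zero.mp hB0).resolve_left hlam⟩
        obtain ⟨n, hn⟩ := (Real.cos_eq_one_iff ω).mp hc
        exact ⟨n, by linear_combination (-1 : ℝ) * hω2 - (ω + 2 * π * n) * hn⟩
  · rintro ⟨k, hk⟩
    by_cases hlam : lam = 0
    · refine ⟨fun _ => 0, fun _ => 1, contDiff_const, contDiff_const,
        fun t => rfl, fun t => rfl, ⟨0, Or.inr one_ne_zero⟩, ?_, ?_⟩ <;>
        intro t <;> simp [hlam]
    · by_cases hlamC : lam + C = 0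
      · refine ⟨fun _ => 1, fun _ => 0, contDiff_const, contDiff_const,
          fun t => rfl, fun t => rfl, ⟨0, Or.inl one_ne_zero⟩, ?_, ?_⟩ <;>
          intro t <;> simp [hlamC]
      · have hk0 : (k : ℝ) ≠ 0 := by
          intro h
          rw [h] at hk
          have h0 : lam * (lam + C) = 0 := by linear_combination hk
          exact (mul_ne_zero hlam hlamC) h0
        set ω : ℝ := 2 * π * k with hωdef
        have hω2 : ω * ω = lam * (lam + C) := by rw [hk]; ring
        refine ⟨fun t => lam * Real.cos (ω * t), fun t => ω * Real.sin (ω * t), ?_, ?_, ?_, ?_,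
          ⟨0, Or.inl (by simpa using hlam)⟩, ?_, ?_⟩
        · exact contDiff_const.mul (Real.contDiff_cos.comp (contDiff_const.mul contDiff_id))
        · exact contDiff_const.mul (Real.contDiff_sin.comp (contDiff_const.mul contDiff_id))
        · intro t
          have : ω * (t + 1) = ω * t + (k : ℝ) * (2 * π) := by rw [hωdef]; ring
          simp only [this, Real.cos_add_int_mul_two_pi]
        · intro t
          have : ω * (t + 1) = ω * t + (k : ℝ) * (2 * π) := by rw [hωdef]; ring
          simp only [this, Real.sin_add_int_mul_two_pi]
        · intro t
          have h := ((hasDerivAt_cos_lin ω t).const_mul lam)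
          rw [h.deriv]
          ring
        · intro t
          have h := ((hasDerivAt_sin_lin ω t).const_mul ω)
          rw [h.deriv]
          linear_combination Real.cos (ω * t) * hω2
end

section
/- Let g : ℝ → ℝ be continuous and strictly decreasing, with g(b) = 0. Let y : ℝ → ℝ be differentiable with y′(s) = g(y(s)) for all s, and suppose y(s) → b as s → −∞. Then y(s) = b for all s. -/
open Real

theorem stmt8 (g : ℝ → ℝ) (b : ℝ)
    (hgc : Continuous g) (hga : StrictAnti g) (hgb : g b = 0)
    (y : ℝ → ℝ)
    (hy : ∀ s : ℝ, HasDerivAt y (g (y s)) s)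
    (hlim : Filter.Tendsto y Filter.atBot (nhds b)) :
    ∀ s : ℝ, y s = b := by
  set V : ℝ → ℝ := fun s => (y s - b) ^ 2 with hV
  have hVd : ∀ s, HasDerivAt V (2 * (y s - b) * g (y s)) s := by
    intro s
    have h := (((hy s).sub_const b).fun_pow 2)
    simpa [mul_comm, mul_assoc, mul_left_comm] using h
  have hderiv_nonpos : ∀ s, deriv V s ≤ 0 := by
    intro s
    rw [(hVd s).deriv]
    rcases le_total (y s) b with h | h
    · have hg : 0 ≤ g (y s) := by
        rcases eq_or_lt_of_le h with h' | h'
        · simp [h', hgb]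
        · exact le_of_lt (by simpa [hgb] using hga h')
      have : 2 * (y s - b) ≤ 0 := by linarith
      exact mul_nonpos_of_nonpos_of_nonneg this hg
    · have hg : g (y s) ≤ 0 := by
        rcases eq_or_lt_of_le h with h' | h'
        · simp [← h', hgb]
        · exact le_of_lt (by simpa [hgb] using hga h')
      have : 0 ≤ 2 * (y s - b) := by linarith
      exact mul_nonpos_of_nonneg_of_nonpos this hg
  have hVdiff : Differentiable ℝ V := fun s => (hVd s).differentiableAt
  have hanti : Antitone V := antitone_of_deriv_nonpos hVdiff hderiv_nonpos
  have hVlim : Filter.Tendsto V Filter.atBot (nhds 0) := by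
    have h1 : Filter.Tendsto (fun s => y s - b) Filter.atBot (nhds 0) := by
      simpa using hlim.sub_const b
    simpa using h1.pow 2
  intro s
  have hle : V s ≤ 0 := by
    apply ge_of_tendsto hVlim
    filter_upwards [Filter.eventually_le_atBot s] with t ht
    exact hanti ht
  have hge : 0 ≤ V s := sq_nonneg _
  have : (y s - b) ^ 2 = 0 := le_antisymm hle hge
  have := pow_eq_zero_iff (n := 2) (by norm_num) |>.mp this
  linarith
end
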